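/- For integrable real random variables X and Y, F ≤_dil G holds if and only if π_{X-E[X]}(t) ≤ π_{Y-E[Y]}(t) for all t ∈ ℝ, where π_Z(t) = E[(Z - t)₊] is the stop-loss transform. -/

import Mathlib

open MeasureTheory Filter

/-- `g` is a subgradient selection for `φ`. -/
def IsSubgrad (φ g : ℝ → ℝ) : Prop := ∀ x y, φ x + g x * (y - x) ≤ φ y

theorem IsSubgrad.mono {φ g : ℝ → ℝ} (h : IsSubgrad φ g) : Monotone g := by
  intro x y hxy
  rcases hxy.eq_or_lt with rfl | hlt
  · exact le_rfl
  · by_contra hgt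
    push_neg at hgt
    nlinarith [h x y, h y x, mul_pos (sub_pos.mpr hgt) (sub_pos.mpr hlt)]

theorem exists_subgrad {φ : ℝ → ℝ} (hφ : ConvexOn ℝ Set.univ φ) :
    ∃ g : ℝ → ℝ, IsSubgrad φ g := by
  set g : ℝ → ℝ := fun x => sInf ((fun h : ℝ => (φ (x + h) - φ x) / h) '' Set.Ioi 0) with hg
  have hslope : ∀ x y z : ℝ, x < y → y < z →
      (φ y - φ x) / (y - x) ≤ (φ z - φ y) / (z - y) := fun x y z h1 h2 =>
    hφ.slope_mono_adjacent (Set.mem_univ x) (Set.mem_univ z) h1 h2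
  have hbdd : ∀ x : ℝ, BddBelow ((fun h : ℝ => (φ (x + h) - φ x) / h) '' Set.Ioi 0) := by
    intro x
    refine ⟨(φ x - φ (x - 1)) / (x - (x - 1)), ?_⟩
    rintro s ⟨h, hh, rfl⟩
    have := hslope (x - 1) x (x + h) (by linarith) (by linarith [Set.mem_Ioi.mp hh])
    simpa [add_sub_cancel_left] using this
  have hne : ∀ x : ℝ, ((fun h : ℝ => (φ (x + h) - φ x) / h) '' Set.Ioi 0).Nonempty :=
    fun x => ⟨_, ⟨1, by norm_num, rfl⟩⟩
  refine ⟨g, fun x y => ?_⟩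
  rcases lt_trichotomy y x with hyx | rfl | hxy
  · -- y < x : need slope(y,x) ≤ g x
    have hle : (φ x - φ y) / (x - y) ≤ g x := by
      apply le_csInf (hne x)
      rintro s ⟨h, hh, rfl⟩
      have := hslope y x (x + h) hyx (by linarith [Set.mem_Ioi.mp hh])
      simpa [add_sub_cancel_left] using this
    have hxy' : (0:ℝ) < x - y := by linarith
    rw [div_le_iff₀ hxy'] at hle
    nlinarith
  · simp
  · have hle : g x ≤ (φ y - φ x) / (y - x) := by
      apply csInf_le (hbdd x)
      exact ⟨y - x, Set.mem_Ioi.mpr (by linarith), by simp⟩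
    have hxy' : (0:ℝ) < y - x := by linarith
    rw [le_div_iff₀ hxy'] at hle
    nlinarith

theorem IsSubgrad.reflect {φ g : ℝ → ℝ} (h : IsSubgrad φ g) :
    IsSubgrad (fun y => φ (-y)) (fun y => -g (-y)) := by
  intro x y
  have := h (-x) (-y)
  simp only
  nlinarith

/-- lower Riemann-sum approximant (hinges at right endpoints). -/
noncomputable def Slo (φ g : ℝ → ℝ) (n j : ℕ) (x : ℝ) : ℝ :=
  φ 0 + g 0 * x + ∑ k ∈ Finset.range j,
    (g (((k:ℝ)+1)/((n:ℝ)+1)) - g ((k:ℝ)/((n:ℝ)+1))) * max (x - ((k:ℝ)+1)/((n:ℝ)+1)) 0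

/-- upper approximant (hinges at left endpoints). -/
noncomputable def Shi (φ g : ℝ → ℝ) (n j : ℕ) (x : ℝ) : ℝ :=
  φ 0 + g 0 * x + ∑ k ∈ Finset.range j,
    (g (((k:ℝ)+1)/((n:ℝ)+1)) - g ((k:ℝ)/((n:ℝ)+1))) * max (x - (k:ℝ)/((n:ℝ)+1)) 0

theorem Slo_succ (φ g : ℝ → ℝ) (n j : ℕ) (x : ℝ) :
    Slo φ g n (j+1) x = Slo φ g n j x +
      (g (((j:ℝ)+1)/((n:ℝ)+1)) - g ((j:ℝ)/((n:ℝ)+1))) * max (x - ((j:ℝ)+1)/((n:ℝ)+1)) 0 := by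
  simp [Slo, Finset.sum_range_succ]; ring

theorem Shi_succ (φ g : ℝ → ℝ) (n j : ℕ) (x : ℝ) :
    Shi φ g n (j+1) x = Shi φ g n j x +
      (g (((j:ℝ)+1)/((n:ℝ)+1)) - g ((j:ℝ)/((n:ℝ)+1))) * max (x - (j:ℝ)/((n:ℝ)+1)) 0 := by
  simp [Shi, Finset.sum_range_succ]; ring

theorem Slo_le {φ g : ℝ → ℝ} (hsg : IsSubgrad φ g) (n j : ℕ) :
    (∀ x, Slo φ g n j x ≤ φ x) ∧
    (∀ x, (j:ℝ)/((n:ℝ)+1) ≤ x →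
      Slo φ g n j x ≤ φ ((j:ℝ)/((n:ℝ)+1)) + g ((j:ℝ)/((n:ℝ)+1)) * (x - (j:ℝ)/((n:ℝ)+1))) := by
  have hnp : (0:ℝ) < (n:ℝ)+1 := by positivity
  induction j with
  | zero =>
    constructor
    · intro x; simpa [Slo] using hsg 0 x
    · intro x hx; simp [Slo]
  | succ j ih =>
    have hcast : ((j+1 : ℕ):ℝ) = (j:ℝ)+1 := by push_cast; ring
    set tj : ℝ := (j:ℝ)/((n:ℝ)+1) with htj
    set tj1 : ℝ := ((j:ℝ)+1)/((n:ℝ)+1) with htj1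
    have htle : tj ≤ tj1 := by
      rw [htj, htj1]; gcongr; linarith
    have hsecond : ∀ x, tj1 ≤ x →
        Slo φ g n (j+1) x ≤ φ tj1 + g tj1 * (x - tj1) := by
      intro x hx
      have h1 := ih.2 x (le_trans htle hx)
      have h2 := hsg tj tj1
      have hmax : max (x - tj1) 0 = x - tj1 := max_eq_left (by linarith)
      rw [Slo_succ, hmax]
      linarith
    constructor
    · intro x
      rcases le_or_gt x tj1 with hx | hx
      · have hmax : max (x - tj1) 0 = 0 := max_eq_right (by linarith)
        rw [Slo_succ, hmax, mul_zero, add_zero]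
        exact ih.1 x
      · have := hsecond x hx.le
        have h3 := hsg tj1 x
        linarith
    · intro x hx
      rw [hcast]
      exact hsecond x (by rw [hcast] at hx; exact hx)

theorem max_sub_max_le (x a b : ℝ) (hab : a ≤ b) :
    max (x - a) 0 - max (x - b) 0 ≤ b - a := by
  have h1 : x - a ≤ max (x - b) 0 + (b - a) := by
    have := le_max_left (x - b) 0; linarith
  have h2 : (0:ℝ) ≤ max (x - b) 0 + (b - a) := by
    have := le_max_right (x - b) 0; linarith
  have := max_le h1 h2
  linarith

theorem Shi_apply_of_ge (φ g : ℝ → ℝ) (n j : ℕ) {x : ℝ} (hx : (j:ℝ)/((n:ℝ)+1) ≤ x) :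
    Shi φ g n (j+1) x = φ 0 + g 0 * x +
      ∑ k ∈ Finset.range (j+1),
        (g (((k:ℝ)+1)/((n:ℝ)+1)) - g ((k:ℝ)/((n:ℝ)+1))) * (x - (k:ℝ)/((n:ℝ)+1)) := by
  have hnp : (0:ℝ) < (n:ℝ)+1 := by positivity
  unfold Shi
  congr 1
  apply Finset.sum_congr rfl
  intro k hk
  have hk' : (k:ℝ) ≤ (j:ℝ) := by
    exact_mod_cast Nat.lt_succ_iff.mp (Finset.mem_range.mp hk)
  have hkx : (k:ℝ)/((n:ℝ)+1) ≤ (j:ℝ)/((n:ℝ)+1) := by gcongr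
  rw [max_eq_left (by linarith)]

theorem sum_tele (g : ℝ → ℝ) (n m : ℕ) :
    ∑ k ∈ Finset.range m, (g (((k:ℝ)+1)/((n:ℝ)+1)) - g ((k:ℝ)/((n:ℝ)+1)))
      = g ((m:ℝ)/((n:ℝ)+1)) - g 0 := by
  have h := Finset.sum_range_sub (f := fun k : ℕ => g ((k:ℝ)/((n:ℝ)+1))) m
  simp only [Nat.cast_zero, zero_div] at h
  rw [← h]
  apply Finset.sum_congr rfl
  intro k _
  push_cast
  norm_num

theorem le_Shi {φ g : ℝ → ℝ} (hsg : IsSubgrad φ g) (n j : ℕ) :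
    ∀ x, 0 ≤ x → x ≤ (j:ℝ)/((n:ℝ)+1) → φ x ≤ Shi φ g n j x := by
  have hnp : (0:ℝ) < (n:ℝ)+1 := by positivity
  have hg := hsg.mono
  induction j with
  | zero =>
    intro x h0 hx
    have : x = 0 := le_antisymm (by simpa using hx) h0
    subst this
    simp [Shi]
  | succ j ih =>
    intro x h0 hx
    have hcast : ((j+1 : ℕ):ℝ) = (j:ℝ)+1 := by push_cast; ring
    set tj : ℝ := (j:ℝ)/((n:ℝ)+1) with htj
    set tj1 : ℝ := ((j:ℝ)+1)/((n:ℝ)+1) with htj1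
    have htle : tj ≤ tj1 := by rw [htj, htj1]; gcongr; linarith
    have htj0 : 0 ≤ tj := by positivity
    have hcj : g tj ≤ g tj1 := hg htle
    rcases le_or_gt x tj with hxle | hxgt
    · have h1 := ih x h0 hxle
      have h2 : 0 ≤ (g tj1 - g tj) * max (x - tj) 0 :=
        mul_nonneg (by linarith) (le_max_right _ _)
      rw [Shi_succ]
      linarith
    · -- tj < x ≤ tj1
      have hx' : x ≤ tj1 := by rw [htj1, ← hcast]; exact hx
      have hprev : φ tj ≤ Shi φ g n (j+1) tj := by
        have h1 := ih tj htj0 le_rfl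
        have h2 : 0 ≤ (g tj1 - g tj) * max (tj - tj) 0 :=
          mul_nonneg (by linarith) (le_max_right _ _)
        rw [Shi_succ]
        linarith
      have heval1 := Shi_apply_of_ge φ g n j (x := x) hxgt.le
      have heval2 := Shi_apply_of_ge φ g n j (x := tj) le_rfl
      have hdiff : Shi φ g n (j+1) x = Shi φ g n (j+1) tj + g tj1 * (x - tj) := by
        rw [heval1, heval2]
        have : ∀ m ∈ Finset.range (j+1),
            (g (((m:ℝ)+1)/((n:ℝ)+1)) - g ((m:ℝ)/((n:ℝ)+1))) * (x - (m:ℝ)/((n:ℝ)+1))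
            - (g (((m:ℝ)+1)/((n:ℝ)+1)) - g ((m:ℝ)/((n:ℝ)+1))) * (tj - (m:ℝ)/((n:ℝ)+1))
            = (g (((m:ℝ)+1)/((n:ℝ)+1)) - g ((m:ℝ)/((n:ℝ)+1))) * (x - tj) := by
          intro m _; ring
        have hsum : ∑ k ∈ Finset.range (j+1),
            (g (((k:ℝ)+1)/((n:ℝ)+1)) - g ((k:ℝ)/((n:ℝ)+1))) * (x - (k:ℝ)/((n:ℝ)+1))
            - ∑ k ∈ Finset.range (j+1),
            (g (((k:ℝ)+1)/((n:ℝ)+1)) - g ((k:ℝ)/((n:ℝ)+1))) * (tj - (k:ℝ)/((n:ℝ)+1))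
            = (g (((j:ℝ)+1)/((n:ℝ)+1)) - g 0) * (x - tj) := by
          rw [← Finset.sum_sub_distrib, Finset.sum_congr rfl this, ← Finset.sum_mul,
            sum_tele g n (j+1), hcast]
        rw [← htj1] at hsum
        linarith
      have hsub : φ x ≤ φ tj + g x * (x - tj) := by
        have := hsg x tj
        nlinarith
      have hgx : g x ≤ g tj1 := hg hx'
      have : φ x ≤ φ tj + g tj1 * (x - tj) := by nlinarith [mul_le_mul_of_nonneg_right hgx (by linarith : (0:ℝ) ≤ x - tj)]
      rw [hdiff]
      linarith

theorem Shi_sub_Slo_le {φ g : ℝ → ℝ} (hsg : IsSubgrad φ g) (n j : ℕ) {x : ℝ} (hx : 0 ≤ x) :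
    Shi φ g n j x - Slo φ g n j x ≤
      (min (g ((j:ℝ)/((n:ℝ)+1))) (g (x+1)) - g 0) / ((n:ℝ)+1) := by
  have hnp : (0:ℝ) < (n:ℝ)+1 := by positivity
  have hg := hsg.mono
  induction j with
  | zero =>
    have h1 : g 0 ≤ g (x+1) := hg (by linarith)
    simp only [Nat.cast_zero, zero_div, Shi, Slo, Finset.range_zero, Finset.sum_empty,
      min_eq_left h1]
    simp
  | succ j ih =>
    have hcast : ((j+1 : ℕ):ℝ) = (j:ℝ)+1 := by push_cast; ring
    set tj : ℝ := (j:ℝ)/((n:ℝ)+1) with htj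
    set tj1 : ℝ := ((j:ℝ)+1)/((n:ℝ)+1) with htj1
    have htle : tj ≤ tj1 := by rw [htj, htj1]; gcongr; linarith
    have hstep : tj1 - tj = 1/((n:ℝ)+1) := by rw [htj, htj1]; field_simp; ring
    have hstep1 : tj1 - tj ≤ 1 := by
      rw [hstep]
      rw [div_le_one hnp]; linarith
    have hcj : 0 ≤ g tj1 - g tj := by have := hg htle; linarith
    rw [Shi_succ, Slo_succ, hcast]
    rcases le_or_gt x tj with hxle | hxgt
    · have hm1 : max (x - tj) 0 = 0 := max_eq_right (by linarith)
      have hm2 : max (x - tj1) 0 = 0 := max_eq_right (by linarith)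
      rw [hm1, hm2]
      have hmin : min (g tj) (g (x+1)) ≤ min (g tj1) (g (x+1)) :=
        min_le_min (hg htle) le_rfl
      have := ih
      have hd : (min (g tj) (g (x+1)) - g 0) / ((n:ℝ)+1)
          ≤ (min (g tj1) (g (x+1)) - g 0) / ((n:ℝ)+1) := by gcongr
      linarith
    · have hxt1 : tj1 ≤ x + 1 := by linarith
      have hxt : tj ≤ x + 1 := by linarith
      have hmin1 : min (g tj1) (g (x+1)) = g tj1 := min_eq_left (hg hxt1)
      have hmin2 : min (g tj) (g (x+1)) ≤ g tj := min_le_left _ _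
      have hterm : (g tj1 - g tj) * max (x - tj) 0 - (g tj1 - g tj) * max (x - tj1) 0
          ≤ (g tj1 - g tj) * (1/((n:ℝ)+1)) := by
        rw [← mul_sub, ← hstep]
        exact mul_le_mul_of_nonneg_left (max_sub_max_le x tj tj1 htle) hcj
      rw [hmin1]
      have := ih
      have hconv : (g tj1 - g tj) * (1/((n:ℝ)+1)) = (g tj1 - g tj) / ((n:ℝ)+1) := by ring
      have hfin : (min (g tj) (g (x+1)) - g 0) / ((n:ℝ)+1) + (g tj1 - g tj) / ((n:ℝ)+1)
          ≤ (g tj1 - g 0) / ((n:ℝ)+1) := by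
        rw [← add_div]
        gcongr
        linarith
      linarith

theorem Slo_of_nonpos (φ g : ℝ → ℝ) (n j : ℕ) {x : ℝ} (hx : x ≤ 0) :
    Slo φ g n j x = φ 0 + g 0 * x := by
  have hnp : (0:ℝ) < (n:ℝ)+1 := by positivity
  unfold Slo
  have : ∀ k ∈ Finset.range j,
      (g (((k:ℝ)+1)/((n:ℝ)+1)) - g ((k:ℝ)/((n:ℝ)+1))) * max (x - ((k:ℝ)+1)/((n:ℝ)+1)) 0 = 0 := by
    intro k _
    have hk : (0:ℝ) < ((k:ℝ)+1)/((n:ℝ)+1) := by positivity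
    rw [max_eq_right (by linarith), mul_zero]
  rw [Finset.sum_congr rfl this]
  simp

theorem tangent_le_Slo {φ g : ℝ → ℝ} (hsg : IsSubgrad φ g) (n j : ℕ) (x : ℝ) :
    φ 0 + g 0 * x ≤ Slo φ g n j x := by
  have hnp : (0:ℝ) < (n:ℝ)+1 := by positivity
  have hg := hsg.mono
  unfold Slo
  have : (0:ℝ) ≤ ∑ k ∈ Finset.range j,
      (g (((k:ℝ)+1)/((n:ℝ)+1)) - g ((k:ℝ)/((n:ℝ)+1))) * max (x - ((k:ℝ)+1)/((n:ℝ)+1)) 0 := by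
    apply Finset.sum_nonneg
    intro k _
    apply mul_nonneg _ (le_max_right _ _)
    have : ((k:ℝ))/((n:ℝ)+1) ≤ ((k:ℝ)+1)/((n:ℝ)+1) := by gcongr; linarith
    have := hg this
    linarith
  linarith

theorem Slo_tendsto {φ g : ℝ → ℝ} (hsg : IsSubgrad φ g) {x : ℝ} (hx : 0 ≤ x) :
    Filter.Tendsto (fun n => Slo φ g n ((n+1)*(n+1)) x) Filter.atTop (nhds (φ x)) := by
  have hg := hsg.mono
  have hupper : ∀ n : ℕ, Slo φ g n ((n+1)*(n+1)) x ≤ φ x :=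
    fun n => (Slo_le hsg n ((n+1)*(n+1))).1 x
  have hlower : ∀ᶠ n : ℕ in Filter.atTop,
      φ x - (g (x+1) - g 0) * (1/((n:ℝ)+1)) ≤ Slo φ g n ((n+1)*(n+1)) x := by
    filter_upwards [Filter.eventually_ge_atTop ⌈x⌉₊] with n hn
    have hnp : (0:ℝ) < (n:ℝ)+1 := by positivity
    have hJ : (((n+1)*(n+1) : ℕ):ℝ)/((n:ℝ)+1) = (n:ℝ)+1 := by
      push_cast
      field_simp
    have hxn : x ≤ (((n+1)*(n+1) : ℕ):ℝ)/((n:ℝ)+1) := by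
      rw [hJ]
      calc x ≤ (⌈x⌉₊ : ℝ) := Nat.le_ceil x
      _ ≤ (n:ℝ) := by exact_mod_cast hn
      _ ≤ (n:ℝ)+1 := by linarith
    have h1 := le_Shi hsg n ((n+1)*(n+1)) x hx hxn
    have h2 := Shi_sub_Slo_le hsg n ((n+1)*(n+1)) (x := x) hx
    have h3 : min (g ((((n+1)*(n+1) : ℕ):ℝ)/((n:ℝ)+1))) (g (x+1)) ≤ g (x+1) :=
      min_le_right _ _
    have h4 : (min (g ((((n+1)*(n+1) : ℕ):ℝ)/((n:ℝ)+1))) (g (x+1)) - g 0) / ((n:ℝ)+1)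
        ≤ (g (x+1) - g 0) * (1/((n:ℝ)+1)) := by
      rw [mul_one_div]
      gcongr
    linarith
  have hlim : Filter.Tendsto (fun n : ℕ => φ x - (g (x+1) - g 0) * (1/((n:ℝ)+1)))
      Filter.atTop (nhds (φ x)) := by
    have h0 : Filter.Tendsto (fun n : ℕ => 1/((n:ℝ)+1)) Filter.atTop (nhds 0) :=
      tendsto_one_div_add_atTop_nhds_zero_nat
    have := (tendsto_const_nhds (x := φ x) (f := Filter.atTop (α := ℕ))).sub
      ((tendsto_const_nhds (x := g (x+1) - g 0) (f := Filter.atTop (α := ℕ))).mul h0)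
    simpa using this
  exact tendsto_of_tendsto_of_tendsto_of_le_of_le' hlim tendsto_const_nhds hlower
    (Filter.Eventually.of_forall hupper)

noncomputable def psi (φ g : ℝ → ℝ) (n : ℕ) (x : ℝ) : ℝ :=
  Slo φ g n ((n+1)*(n+1)) x
    + Slo (fun y => φ (-y)) (fun y => -g (-y)) n ((n+1)*(n+1)) (-x)
    - (φ 0 + g 0 * x)

theorem psi_of_nonneg (φ g : ℝ → ℝ) (n : ℕ) {x : ℝ} (hx : 0 ≤ x) :
    psi φ g n x = Slo φ g n ((n+1)*(n+1)) x := by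
  unfold psi
  rw [Slo_of_nonpos _ _ _ _ (by linarith : -x ≤ 0)]
  simp only [neg_zero]
  ring

theorem psi_of_nonpos (φ g : ℝ → ℝ) (n : ℕ) {x : ℝ} (hx : x ≤ 0) :
    psi φ g n x = Slo (fun y => φ (-y)) (fun y => -g (-y)) n ((n+1)*(n+1)) (-x) := by
  unfold psi
  rw [Slo_of_nonpos _ _ _ _ hx]
  ring

theorem psi_le {φ g : ℝ → ℝ} (hsg : IsSubgrad φ g) (n : ℕ) (x : ℝ) :
    psi φ g n x ≤ φ x := by
  rcases le_total 0 x with hx | hx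
  · rw [psi_of_nonneg _ _ _ hx]
    exact (Slo_le hsg n _).1 x
  · rw [psi_of_nonpos _ _ _ hx]
    have := (Slo_le hsg.reflect n ((n+1)*(n+1))).1 (-x)
    simpa using this

theorem tangent_le_psi {φ g : ℝ → ℝ} (hsg : IsSubgrad φ g) (n : ℕ) (x : ℝ) :
    φ 0 + g 0 * x ≤ psi φ g n x := by
  have h1 := tangent_le_Slo hsg n ((n+1)*(n+1)) x
  have h2 := tangent_le_Slo hsg.reflect n ((n+1)*(n+1)) (-x)
  simp only [neg_zero] at h2
  unfold psi
  nlinarith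

theorem psi_tendsto {φ g : ℝ → ℝ} (hsg : IsSubgrad φ g) (x : ℝ) :
    Filter.Tendsto (fun n => psi φ g n x) Filter.atTop (nhds (φ x)) := by
  rcases le_total 0 x with hx | hx
  · have := Slo_tendsto hsg hx
    apply this.congr
    intro n
    rw [psi_of_nonneg _ _ _ hx]
  · have := Slo_tendsto hsg.reflect (x := -x) (by linarith)
    simp only [neg_neg] at this
    apply this.congr
    intro n
    rw [psi_of_nonpos _ _ _ hx]

section Integrals

variable {Ω : Type*} [MeasurableSpace Ω] {μ : Measure Ω} [IsProbabilityMeasure μ]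

theorem integrable_hinge {Z : Ω → ℝ} (hZ : Integrable Z μ) (t : ℝ) :
    Integrable (fun ω => max (Z ω - t) 0) μ :=
  (hZ.sub (integrable_const t)).pos_part

theorem integrable_Slo_comp (φ g : ℝ → ℝ) (n j : ℕ) {Z : Ω → ℝ} (hZ : Integrable Z μ) :
    Integrable (fun ω => Slo φ g n j (Z ω)) μ := by
  simp only [Slo]
  apply Integrable.add
  · exact (integrable_const _).add (hZ.const_mul _)
  · apply integrable_finset_sum
    intro k _
    exact (integrable_hinge hZ _).const_mul _

theorem integral_Slo (φ g : ℝ → ℝ) (n j : ℕ) {Z : Ω → ℝ} (hZ : Integrable Z μ)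
    (hmZ : ∫ ω, Z ω ∂μ = 0) :
    ∫ ω, Slo φ g n j (Z ω) ∂μ = φ 0 +
      ∑ k ∈ Finset.range j, (g (((k:ℝ)+1)/((n:ℝ)+1)) - g ((k:ℝ)/((n:ℝ)+1))) *
        ∫ ω, max (Z ω - ((k:ℝ)+1)/((n:ℝ)+1)) 0 ∂μ := by
  simp only [Slo]
  have i1 : Integrable (fun ω => φ 0 + g 0 * Z ω) μ := (integrable_const _).add (hZ.const_mul _)
  have i2 : Integrable (fun ω => ∑ k ∈ Finset.range j,
      (g (((k:ℝ)+1)/((n:ℝ)+1)) - g ((k:ℝ)/((n:ℝ)+1))) *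
        max (Z ω - ((k:ℝ)+1)/((n:ℝ)+1)) 0) μ :=
    integrable_finset_sum _ (fun k _ => (integrable_hinge hZ _).const_mul _)
  rw [integral_add i1 i2, integral_add (integrable_const _) (hZ.const_mul _),
    integral_finset_sum _ (fun k _ => (integrable_hinge hZ _).const_mul _)]
  simp only [MeasureTheory.integral_const_mul, hmZ, mul_zero, add_zero]
  simp [integral_const]

end Integrals

section Core

variable {Ω : Type*} [MeasurableSpace Ω] {μ : Measure Ω} [IsProbabilityMeasure μ]

theorem integral_neg_hinge {Z : Ω → ℝ} (hZ : Integrable Z μ) (hmZ : ∫ ω, Z ω ∂μ = 0) (t : ℝ) :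
    ∫ ω, max (-Z ω - t) 0 ∂μ = (∫ ω, max (Z ω - (-t)) 0 ∂μ) - t := by
  have hpt : ∀ z : ℝ, max (-z - t) 0 = max (z - (-t)) 0 - z - t := by
    intro z
    rcases le_total z (-t) with h | h
    · rw [max_eq_left (by linarith), max_eq_right (by linarith)]; ring
    · rw [max_eq_right (by linarith), max_eq_left (by linarith)]; ring
  have : (fun ω => max (-Z ω - t) 0) = fun ω => max (Z ω - (-t)) 0 - Z ω - t :=
    funext fun ω => hpt (Z ω)
  have ia : Integrable (fun ω => max (Z ω - (-t)) 0 - Z ω) μ := (integrable_hinge hZ _).sub hZ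
  rw [this, integral_sub ia (integrable_const t), integral_sub (integrable_hinge hZ _) hZ,
    hmZ, integral_const]
  simp

theorem integral_psi_expand (φ g : ℝ → ℝ) (n : ℕ) {Z : Ω → ℝ}
    (hZ : Integrable Z μ) (hmZ : ∫ ω, Z ω ∂μ = 0) :
    ∫ ω, psi φ g n (Z ω) ∂μ = φ 0
      + ∑ k ∈ Finset.range ((n+1)*(n+1)),
          (g (((k:ℝ)+1)/((n:ℝ)+1)) - g ((k:ℝ)/((n:ℝ)+1))) *
            ∫ ω, max (Z ω - ((k:ℝ)+1)/((n:ℝ)+1)) 0 ∂μ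
      + ∑ k ∈ Finset.range ((n+1)*(n+1)),
          (-g (-(((k:ℝ)+1)/((n:ℝ)+1))) - -g (-((k:ℝ)/((n:ℝ)+1)))) *
            ∫ ω, max (-Z ω - ((k:ℝ)+1)/((n:ℝ)+1)) 0 ∂μ := by
  have hZneg : Integrable (fun ω => -Z ω) μ := hZ.neg
  have hmZneg : ∫ ω, -Z ω ∂μ = 0 := by rw [integral_neg, hmZ, neg_zero]
  have i1 := integrable_Slo_comp (μ := μ) φ g n ((n+1)*(n+1)) hZ
  have i2 := integrable_Slo_comp (μ := μ) (fun y => φ (-y)) (fun y => -g (-y)) n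
    ((n+1)*(n+1)) hZneg
  have i3 : Integrable (fun ω => φ 0 + g 0 * Z ω) μ := (integrable_const _).add (hZ.const_mul _)
  have e1 := integral_Slo (μ := μ) φ g n ((n+1)*(n+1)) hZ hmZ
  have e2 := integral_Slo (μ := μ) (fun y => φ (-y)) (fun y => -g (-y)) n
    ((n+1)*(n+1)) hZneg hmZneg
  have i12 : Integrable (fun ω => Slo φ g n ((n+1)*(n+1)) (Z ω)
      + Slo (fun y => φ (-y)) (fun y => -g (-y)) n ((n+1)*(n+1)) (-Z ω)) μ := i1.add i2
  simp only [psi]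
  rw [integral_sub i12 i3, integral_add i1 i2,
    integral_add (integrable_const _) (hZ.const_mul _)]
  rw [e1, e2, MeasureTheory.integral_const_mul, hmZ, integral_const]
  simp only [neg_zero, measure_univ, probReal_univ, smul_eq_mul, one_mul, mul_zero,
    add_zero]
  ring

theorem integral_psi_mono (φ g : ℝ → ℝ) (hsg : IsSubgrad φ g) (n : ℕ) {Z W : Ω → ℝ}
    (hZ : Integrable Z μ) (hW : Integrable W μ)
    (hmZ : ∫ ω, Z ω ∂μ = 0) (hmW : ∫ ω, W ω ∂μ = 0)
    (hsl : ∀ t : ℝ, ∫ ω, max (Z ω - t) 0 ∂μ ≤ ∫ ω, max (W ω - t) 0 ∂μ) :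
    ∫ ω, psi φ g n (Z ω) ∂μ ≤ ∫ ω, psi φ g n (W ω) ∂μ := by
  have hg := hsg.mono
  have hgr := hsg.reflect.mono
  rw [integral_psi_expand φ g n hZ hmZ, integral_psi_expand φ g n hW hmW]
  have hnp : (0:ℝ) < (n:ℝ)+1 := by positivity
  have h1 : ∑ k ∈ Finset.range ((n+1)*(n+1)),
      (g (((k:ℝ)+1)/((n:ℝ)+1)) - g ((k:ℝ)/((n:ℝ)+1))) *
        ∫ ω, max (Z ω - ((k:ℝ)+1)/((n:ℝ)+1)) 0 ∂μ
      ≤ ∑ k ∈ Finset.range ((n+1)*(n+1)),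
      (g (((k:ℝ)+1)/((n:ℝ)+1)) - g ((k:ℝ)/((n:ℝ)+1))) *
        ∫ ω, max (W ω - ((k:ℝ)+1)/((n:ℝ)+1)) 0 ∂μ := by
    apply Finset.sum_le_sum
    intro k _
    apply mul_le_mul_of_nonneg_left (hsl _)
    have h : ((k:ℝ))/((n:ℝ)+1) ≤ ((k:ℝ)+1)/((n:ℝ)+1) := by gcongr; linarith
    have := hg h
    linarith
  have h2 : ∑ k ∈ Finset.range ((n+1)*(n+1)),
      (-g (-(((k:ℝ)+1)/((n:ℝ)+1))) - -g (-((k:ℝ)/((n:ℝ)+1)))) *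
        ∫ ω, max (-Z ω - ((k:ℝ)+1)/((n:ℝ)+1)) 0 ∂μ
      ≤ ∑ k ∈ Finset.range ((n+1)*(n+1)),
      (-g (-(((k:ℝ)+1)/((n:ℝ)+1))) - -g (-((k:ℝ)/((n:ℝ)+1)))) *
        ∫ ω, max (-W ω - ((k:ℝ)+1)/((n:ℝ)+1)) 0 ∂μ := by
    apply Finset.sum_le_sum
    intro k _
    have h : ((k:ℝ))/((n:ℝ)+1) ≤ ((k:ℝ)+1)/((n:ℝ)+1) := by gcongr; linarith
    have hcoef : 0 ≤ -g (-(((k:ℝ)+1)/((n:ℝ)+1))) - -g (-((k:ℝ)/((n:ℝ)+1))) := by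
      have := hgr h
      simp only at this
      linarith
    apply mul_le_mul_of_nonneg_left _ hcoef
    rw [integral_neg_hinge hZ hmZ, integral_neg_hinge hW hmW]
    have := hsl (-(((k:ℝ)+1)/((n:ℝ)+1)))
    linarith
  linarith

theorem core_dil {Z W : Ω → ℝ} (hZ : Integrable Z μ) (hW : Integrable W μ)
    (hmZ : ∫ ω, Z ω ∂μ = 0) (hmW : ∫ ω, W ω ∂μ = 0)
    (hsl : ∀ t : ℝ, ∫ ω, max (Z ω - t) 0 ∂μ ≤ ∫ ω, max (W ω - t) 0 ∂μ)
    (φ : ℝ → ℝ) (hφ : ConvexOn ℝ Set.univ φ)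
    (hφZ : Integrable (fun ω => φ (Z ω)) μ) (hφW : Integrable (fun ω => φ (W ω)) μ) :
    ∫ ω, φ (Z ω) ∂μ ≤ ∫ ω, φ (W ω) ∂μ := by
  obtain ⟨g, hsg⟩ := exists_subgrad hφ
  have key : ∀ n : ℕ, ∫ ω, psi φ g n (Z ω) ∂μ ≤ ∫ ω, psi φ g n (W ω) ∂μ :=
    fun n => integral_psi_mono φ g hsg n hZ hW hmZ hmW hsl
  have hconv : ∀ {V : Ω → ℝ}, Integrable V μ → Integrable (fun ω => φ (V ω)) μ →
      Filter.Tendsto (fun n => ∫ ω, psi φ g n (V ω) ∂μ) Filter.atTop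
        (nhds (∫ ω, φ (V ω) ∂μ)) := by
    intro V hV hφV
    apply MeasureTheory.tendsto_integral_of_dominated_convergence
      (fun ω => |φ (V ω)| + (|φ 0| + |g 0| * |V ω|))
    · intro n
      have : Integrable (fun ω => psi φ g n (V ω)) μ := by
        simp only [psi]
        exact ((integrable_Slo_comp φ g n _ hV).add
          (integrable_Slo_comp _ _ n _ hV.neg)).sub
          ((integrable_const _).add (hV.const_mul _))
      exact this.aestronglyMeasurable
    · exact hφV.abs.add ((integrable_const _).add (hV.abs.const_mul _))
    · intro n
      apply Filter.Eventually.of_forall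
      intro ω
      have h1 := psi_le hsg n (V ω)
      have h2 := tangent_le_psi hsg n (V ω)
      have h3 : |g 0 * V ω| = |g 0| * |V ω| := abs_mul _ _
      have h4 := le_abs_self (φ (V ω))
      have h5 := neg_abs_le (φ (V ω))
      have h6 := le_abs_self (φ 0)
      have h7 := neg_abs_le (φ 0)
      have h8 := le_abs_self (g 0 * V ω)
      have h9 := neg_abs_le (g 0 * V ω)
      rw [Real.norm_eq_abs, abs_le]
      constructor <;> [skip; skip] <;> rw [← h3] <;> linarith
    · exact Filter.Eventually.of_forall fun ω => psi_tendsto hsg (V ω)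
  exact le_of_tendsto_of_tendsto' (hconv hZ hφZ) (hconv hW hφW) key

end Core

theorem hinge_convex (t : ℝ) : ConvexOn ℝ Set.univ (fun x : ℝ => max (x - t) 0) := by
  refine ⟨convex_univ, ?_⟩
  intro x _ y _ a b ha hb hab
  simp only [smul_eq_mul]
  apply max_le
  · have h1 : a * x + b * y - t = a * (x - t) + b * (y - t) := by linear_combination t * hab
    rw [h1]
    exact add_le_add (mul_le_mul_of_nonneg_left (le_max_left _ _) ha)
      (mul_le_mul_of_nonneg_left (le_max_left _ _) hb)
  · exact add_nonneg (mul_nonneg ha (le_max_right _ _)) (mul_nonneg hb (le_max_right _ _))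

/-- The dilation order `F ≤_dil G` holds iff the stop-loss transforms of the
centered variables are pointwise ordered. -/
theorem stmt_3 {Ω : Type*} [MeasurableSpace Ω] (μ : Measure Ω)
    [IsProbabilityMeasure μ] (X Y : Ω → ℝ)
    (hX : Integrable X μ) (hY : Integrable Y μ) :
    (∀ φ : ℝ → ℝ, ConvexOn ℝ Set.univ φ →
      Integrable (fun ω => φ (X ω - ∫ ω', X ω' ∂μ)) μ →
      Integrable (fun ω => φ (Y ω - ∫ ω', Y ω' ∂μ)) μ →
      ∫ ω, φ (X ω - ∫ ω', X ω' ∂μ) ∂μ ≤ ∫ ω, φ (Y ω - ∫ ω', Y ω' ∂μ) ∂μ)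
    ↔
    (∀ t : ℝ, ∫ ω, max (X ω - (∫ ω', X ω' ∂μ) - t) 0 ∂μ ≤
        ∫ ω, max (Y ω - (∫ ω', Y ω' ∂μ) - t) 0 ∂μ) := by
  constructor
  · intro h t
    exact h (fun x => max (x - t) 0) (hinge_convex t)
      (((hX.sub (integrable_const _)).sub (integrable_const t)).pos_part)
      (((hY.sub (integrable_const _)).sub (integrable_const t)).pos_part)
  · intro h φ hφ hiX hiY
    have hmX : ∫ ω, (X ω - ∫ ω', X ω' ∂μ) ∂μ = 0 := by
      rw [integral_sub hX (integrable_const _), integral_const]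
      simp
    have hmY : ∫ ω, (Y ω - ∫ ω', Y ω' ∂μ) ∂μ = 0 := by
      rw [integral_sub hY (integrable_const _), integral_const]
      simp
    exact core_dil (hX.sub (integrable_const _)) (hY.sub (integrable_const _))
      hmX hmY h φ hφ hiX hiY
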